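/- Let Q be a quandle, n ≥ 2, and π : Q → Q_n a universal n-quandle quotient. Then the enveloping group Env(Q_n) is isomorphic to the quotient of Env(Q) by the normal closure of the set {e_x^n e_y e_x^{-n} e_y^{-1} : x, y ∈ Q}, via an isomorphism sending e_{π(x)} to the class of e_x for each x ∈ Q. -/

import Mathlib

open Quandles

universe u v

/-- `Q` is an `n`-quandle: `x *ⁿ y = x` for all `x y` (the paper's `x * y` is `y ◃ x`). -/
def IsNQuandle (Q : Type*) [Quandle Q] (n : ℕ) : Prop :=
  ∀ x y : Q, (fun a => y ◃ a)^[n] x = x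

/-- `π : Q → Qn` is a universal `n`-quandle quotient. -/
def IsUniversalNQuandleQuotient {Q : Type u} {Qn : Type v} [Quandle Q] [Quandle Qn]
    (n : ℕ) (π : Q →◃ Qn) : Prop :=
  Function.Surjective π ∧ IsNQuandle Qn n ∧
    ∀ (Y : Type max u v) [Quandle Y], IsNQuandle Y n →
      ∀ f : Q →◃ Y, ∃! g : Qn →◃ Y, ∀ x, g (π x) = f x

section AuxDefs

variable {G : Type*} [Group G] {n : ℕ}

/-- The subquandle of the conjugation quandle consisting of elements whose `n`-th
power is central. -/
def NthConj (G : Type*) [Group G] (n : ℕ) : Type _ := {g : G // g ^ n ∈ Subgroup.center G}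

namespace NthConj

instance : Quandle (NthConj G n) where
  act x y := ⟨x.1 * y.1 * x.1⁻¹, by
    rw [conj_pow]
    have h : x.1 * y.1 ^ n * x.1⁻¹ = y.1 ^ n := by
      rw [Subgroup.mem_center_iff.mp y.2 x.1]; group
    rw [h]; exact y.2⟩
  self_distrib := by
    intro x y z
    apply Subtype.ext
    show x.1 * (y.1 * z.1 * y.1⁻¹) * x.1⁻¹ = _
    group
  invAct x y := ⟨x.1⁻¹ * y.1 * (x.1⁻¹)⁻¹, by
    rw [conj_pow]
    have h : x.1⁻¹ * y.1 ^ n * (x.1⁻¹)⁻¹ = y.1 ^ n := by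
      rw [Subgroup.mem_center_iff.mp y.2 x.1⁻¹]; group
    rw [h]; exact y.2⟩
  left_inv x y := by
    apply Subtype.ext
    show x.1⁻¹ * (x.1 * y.1 * x.1⁻¹) * (x.1⁻¹)⁻¹ = y.1
    group
  right_inv x y := by
    apply Subtype.ext
    show x.1 * (x.1⁻¹ * y.1 * (x.1⁻¹)⁻¹) * x.1⁻¹ = y.1
    group
  fix := by
    intro x
    apply Subtype.ext
    show x.1 * x.1 * x.1⁻¹ = x.1
    group

@[simp] lemma act_val (x y : NthConj G n) : (x ◃ y).1 = x.1 * y.1 * x.1⁻¹ := rfl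

lemma iterate_act_val (y x : NthConj G n) (k : ℕ) :
    ((fun a => y ◃ a)^[k] x).1 = y.1 ^ k * x.1 * (y.1 ^ k)⁻¹ := by
  induction k with
  | zero => simp
  | succ k ih =>
    rw [Function.iterate_succ_apply']
    show y.1 * ((fun a => y ◃ a)^[k] x).1 * y.1⁻¹ = _
    rw [ih, pow_succ']
    group

lemma isNQuandle : IsNQuandle (NthConj G n) n := by
  intro x y
  apply Subtype.ext
  rw [iterate_act_val]
  rw [← Subgroup.mem_center_iff.mp y.2 x.1]
  group

/-- Inclusion into the conjugation quandle. -/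
def incl : NthConj G n →◃ Quandle.Conj G where
  toFun := Subtype.val
  map_act' := rfl

end NthConj

/-- Quandle structure on `ULift`. -/
instance ULift.quandle {α : Type*} [Quandle α] : Quandle (ULift α) where
  act x y := ⟨x.down ◃ y.down⟩
  self_distrib := by intro x y z; exact congrArg ULift.up Shelf.self_distrib
  invAct x y := ⟨x.down ◃⁻¹ y.down⟩
  left_inv x := fun y => congrArg ULift.up (Rack.left_inv x.down y.down)
  right_inv x := fun y => congrArg ULift.up (Rack.right_inv x.down y.down)
  fix := by intro x; exact congrArg ULift.up Quandle.fix

@[simp] lemma ULift.act_down {α : Type*} [Quandle α] (x y : ULift α) :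
    (x ◃ y).down = x.down ◃ y.down := rfl

/-- down as a shelf hom. -/
def ULift.downSH {α : Type*} [Quandle α] : ULift α →◃ α where
  toFun := ULift.down
  map_act' := rfl

lemma ULift.isNQuandle {α : Type*} [Quandle α] {n : ℕ} (h : IsNQuandle α n) :
    IsNQuandle (ULift α) n := by
  intro x y
  have key : ∀ k : ℕ, ((fun a => y ◃ a)^[k] x).down = (fun a => y.down ◃ a)^[k] x.down := by
    intro k
    induction k with
    | zero => rfl
    | succ k ih => rw [Function.iterate_succ_apply', Function.iterate_succ_apply', ← ih]; rfl
  apply ULift.ext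
  rw [key n, h x.down y.down]

lemma central_of_comm_gen {S : Set G} (hS : Subgroup.closure S = ⊤) {z : G}
    (h : ∀ s ∈ S, s * z = z * s) : z ∈ Subgroup.center G := by
  rw [Subgroup.mem_center_iff]
  intro g
  have hle : Subgroup.closure S ≤ Subgroup.centralizer {z} := by
    refine (Subgroup.closure_le _).mpr fun s hs => Subgroup.mem_centralizer_iff.mpr ?_
    intro t ht
    rw [Set.mem_singleton_iff] at ht
    subst ht
    exact (h s hs).symm
  have hg : g ∈ Subgroup.centralizer {z} := hle (hS ▸ Subgroup.mem_top g)
  exact (Subgroup.mem_centralizer_iff.mp hg z (Set.mem_singleton z)).symm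

lemma envel_gen (R : Type*) [Rack R] :
    Subgroup.closure (Set.range fun x : R => (Rack.toEnvelGroup R x : Rack.EnvelGroup R)) = ⊤ := by
  rw [eq_top_iff]
  rintro g -
  induction g using Quotient.inductionOn with
  | h a =>
    induction a with
    | unit => exact one_mem _
    | incl x => exact Subgroup.subset_closure ⟨x, rfl⟩
    | mul a b iha ihb => exact mul_mem iha ihb
    | inv a iha => exact inv_mem iha

lemma envel_hom_ext {R : Type*} [Rack R] {H : Type*} [Group H]
    {F F' : Rack.EnvelGroup R →* H}
    (h : ∀ x : R, F (Rack.toEnvelGroup R x) = F' (Rack.toEnvelGroup R x)) : F = F' := by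
  apply Rack.toEnvelGroup.map.symm.injective
  ext x
  exact h x

lemma envel_iterate {R : Type*} [Quandle R] (a b : R) (k : ℕ) :
    (Rack.toEnvelGroup R ((fun c => a ◃ c)^[k] b) : Rack.EnvelGroup R) =
      (Rack.toEnvelGroup R a : Rack.EnvelGroup R) ^ k * Rack.toEnvelGroup R b *
        ((Rack.toEnvelGroup R a : Rack.EnvelGroup R) ^ k)⁻¹ := by
  induction k with
  | zero => simp
  | succ k ih =>
    rw [Function.iterate_succ_apply', ShelfHom.map_act, Quandle.conj_act_eq_conj, ih, pow_succ']
    group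

lemma pow_central_of_nquandle {R : Type*} [Quandle R] {n : ℕ} (h : IsNQuandle R n) (a : R) :
    (Rack.toEnvelGroup R a : Rack.EnvelGroup R) ^ n ∈ Subgroup.center (Rack.EnvelGroup R) := by
  apply central_of_comm_gen (envel_gen R)
  rintro _ ⟨b, rfl⟩
  have key := envel_iterate a b n
  rw [h b a] at key
  show (Rack.toEnvelGroup R b : Rack.EnvelGroup R) *
      (Rack.toEnvelGroup R a : Rack.EnvelGroup R) ^ n =
    (Rack.toEnvelGroup R a : Rack.EnvelGroup R) ^ n * Rack.toEnvelGroup R b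
  conv_lhs => rw [key]
  group

end AuxDefs

/-- `Env(Qₙ)` is isomorphic to the quotient of `Env(Q)` by the normal closure
of `{eₓⁿ e_y eₓ⁻ⁿ e_y⁻¹ : x, y ∈ Q}`, via an isomorphism sending `e_{π x}` to the class
of `eₓ`. -/
theorem stmt_3 {Q : Type u} {Qn : Type v} [Quandle Q] [Quandle Qn]
    {n : ℕ} (hn : 2 ≤ n) (π : Q →◃ Qn) (hπ : IsUniversalNQuandleQuotient n π) :
    ∃ φ : Rack.EnvelGroup Qn ≃*
        Rack.EnvelGroup Q ⧸ Subgroup.normalClosure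
          {g : Rack.EnvelGroup Q | ∃ x y : Q,
            g = (Rack.toEnvelGroup Q x) ^ n * Rack.toEnvelGroup Q y *
                ((Rack.toEnvelGroup Q x) ^ n)⁻¹ * (Rack.toEnvelGroup Q y)⁻¹},
      ∀ x : Q, φ (Rack.toEnvelGroup Qn (π x)) =
        QuotientGroup.mk (Rack.toEnvelGroup Q x) := by
  obtain ⟨hsurj, hQn, huniv⟩ := hπ
  set N := Subgroup.normalClosure
    {g : Rack.EnvelGroup Q | ∃ x y : Q,
      g = (Rack.toEnvelGroup Q x) ^ n * Rack.toEnvelGroup Q y *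
          ((Rack.toEnvelGroup Q x) ^ n)⁻¹ * (Rack.toEnvelGroup Q y)⁻¹} with hN
  -- the classes of the generators have central n-th powers
  have hcentral : ∀ x : Q,
      ((QuotientGroup.mk (Rack.toEnvelGroup Q x) : Rack.EnvelGroup Q ⧸ N)) ^ n ∈
        Subgroup.center (Rack.EnvelGroup Q ⧸ N) := by
    intro x
    apply central_of_comm_gen
      (S := (QuotientGroup.mk' N) ''
        (Set.range fun y : Q => (Rack.toEnvelGroup Q y : Rack.EnvelGroup Q)))
    · rw [← MonoidHom.map_closure, envel_gen]
      exact Subgroup.map_top_of_surjective _ (QuotientGroup.mk'_surjective N)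
    · rintro _ ⟨_, ⟨y, rfl⟩, rfl⟩
      have hrel : ((Rack.toEnvelGroup Q x : Rack.EnvelGroup Q) ^ n * Rack.toEnvelGroup Q y *
          ((Rack.toEnvelGroup Q x : Rack.EnvelGroup Q) ^ n)⁻¹ *
          (Rack.toEnvelGroup Q y : Rack.EnvelGroup Q)⁻¹) ∈ N :=
        Subgroup.subset_normalClosure ⟨x, y, rfl⟩
      have h1 : ((QuotientGroup.mk (Rack.toEnvelGroup Q x) : Rack.EnvelGroup Q ⧸ N)) ^ n *
          QuotientGroup.mk (Rack.toEnvelGroup Q y) *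
          (((QuotientGroup.mk (Rack.toEnvelGroup Q x) : Rack.EnvelGroup Q ⧸ N)) ^ n)⁻¹ *
          (QuotientGroup.mk (Rack.toEnvelGroup Q y) : Rack.EnvelGroup Q ⧸ N)⁻¹ = 1 := by
        rw [← QuotientGroup.mk_pow, ← QuotientGroup.mk_inv, ← QuotientGroup.mk_inv,
          ← QuotientGroup.mk_mul, ← QuotientGroup.mk_mul, ← QuotientGroup.mk_mul]
        exact (QuotientGroup.eq_one_iff _).mpr hrel
      have h2 := mul_inv_eq_one.mp h1
      show (QuotientGroup.mk (Rack.toEnvelGroup Q y) : Rack.EnvelGroup Q ⧸ N) *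
          ((QuotientGroup.mk (Rack.toEnvelGroup Q x) : Rack.EnvelGroup Q ⧸ N)) ^ n =
        ((QuotientGroup.mk (Rack.toEnvelGroup Q x) : Rack.EnvelGroup Q ⧸ N)) ^ n *
          QuotientGroup.mk (Rack.toEnvelGroup Q y)
      conv_lhs => rw [← h2]
      group
  -- the target n-quandle
  let Y := ULift.{v} (NthConj (Rack.EnvelGroup Q ⧸ N) n)
  have hY : IsNQuandle Y n := ULift.isNQuandle NthConj.isNQuandle
  let f : Q →◃ Y :=
    { toFun := fun x => ⟨⟨QuotientGroup.mk (Rack.toEnvelGroup Q x), hcentral x⟩⟩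
      map_act' := by
        intro x y
        apply ULift.ext
        apply Subtype.ext
        show (QuotientGroup.mk (Rack.toEnvelGroup Q (x ◃ y)) : Rack.EnvelGroup Q ⧸ N) = _
        have : (Rack.toEnvelGroup Q (x ◃ y) : Rack.EnvelGroup Q) =
            Rack.toEnvelGroup Q x * Rack.toEnvelGroup Q y *
              (Rack.toEnvelGroup Q x : Rack.EnvelGroup Q)⁻¹ :=
          (Rack.toEnvelGroup Q).map_act'
        rw [this, QuotientGroup.mk_mul, QuotientGroup.mk_mul, QuotientGroup.mk_inv]
        rfl }
  obtain ⟨g, hg, -⟩ := huniv Y hY f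
  -- the forward homomorphism
  let F : Qn →◃ Quandle.Conj (Rack.EnvelGroup Q ⧸ N) :=
    NthConj.incl.comp (ULift.downSH.comp g)
  let Φ : Rack.EnvelGroup Qn →* Rack.EnvelGroup Q ⧸ N := Rack.toEnvelGroup.map F
  have hΦ : ∀ a : Qn, Φ (Rack.toEnvelGroup Qn a) = ((g a).down : NthConj _ n).1 := fun a => rfl
  have hΦπ : ∀ x : Q, Φ (Rack.toEnvelGroup Qn (π x)) =
      QuotientGroup.mk (Rack.toEnvelGroup Q x) := by
    intro x
    rw [hΦ, hg x]
    rfl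
  -- the backward homomorphism
  let Ψ0 : Rack.EnvelGroup Q →* Rack.EnvelGroup Qn :=
    Rack.toEnvelGroup.map ((Rack.toEnvelGroup Qn).comp π)
  have hΨ0 : ∀ x : Q, Ψ0 (Rack.toEnvelGroup Q x) = Rack.toEnvelGroup Qn (π x) := fun x => rfl
  have hker : N ≤ Ψ0.ker := by
    apply Subgroup.normalClosure_le_normal
    rintro _ ⟨x, y, rfl⟩
    rw [SetLike.mem_coe, MonoidHom.mem_ker, map_mul, map_mul, map_mul, map_inv, map_inv,
      map_pow, hΨ0 x, hΨ0 y]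
    have hc := Subgroup.mem_center_iff.mp (pow_central_of_nquandle hQn (π x))
      (Rack.toEnvelGroup Qn (π y))
    rw [← hc]
    group
  let Ψ : Rack.EnvelGroup Q ⧸ N →* Rack.EnvelGroup Qn := QuotientGroup.lift N Ψ0 hker
  have hΨ : ∀ x : Q, Ψ (QuotientGroup.mk (Rack.toEnvelGroup Q x)) =
      Rack.toEnvelGroup Qn (π x) := fun x => hΨ0 x
  -- mutual inverses
  have hleft : Ψ.comp Φ = MonoidHom.id _ := by
    apply envel_hom_ext
    intro a
    obtain ⟨x, rfl⟩ := hsurj a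
    show Ψ (Φ (Rack.toEnvelGroup Qn (π x))) = _
    rw [hΦπ, hΨ]
    rfl
  have hright : Φ.comp Ψ = MonoidHom.id _ := by
    apply QuotientGroup.monoidHom_ext
    apply envel_hom_ext
    intro x
    show Φ (Ψ (QuotientGroup.mk (Rack.toEnvelGroup Q x))) = _
    rw [hΨ, hΦπ]
    rfl
  refine ⟨{ toFun := Φ, invFun := Ψ,
            left_inv := fun a => by
              have := DFunLike.congr_fun hleft a
              simpa using this,
            right_inv := fun a => by
              have := DFunLike.congr_fun hright a
              exact this,
            map_mul' := Φ.map_mul }, ?_⟩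
  intro x
  exact hΦπ x
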